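/- For every natural number m and every d ∈ ℕ, the d-th coefficient b_{m,d} ∈ ℚ(q) of B_m(t), written as a quotient of coprime polynomials, has denominator not vanishing at q = −1, so its value b_{m,d}(−1) ∈ ℚ is defined; moreover the specialized series β_m(t) := Σ_{d≥0} b_{m,d}(−1)·t^d ∈ ℚ[[t]] satisfies the equation β_m = 1 + (−1)^{m+1}·t·β_m^m. (This is the Euler-characteristic specialization q^{1/2} ↦ −1 of the motivic series B^{(m)}.) -/

import Mathlib

open PowerSeries Finset

/-- The variable `q` of `K = ℚ(q)`, playing the role of `𝕃^{1/2}`. -/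
noncomputable def q : RatFunc ℚ := RatFunc.X

/-- The `d`-th coefficient `q^{m d² + d} / ∏_{i=1}^{d} (q^{2i} - 1)` of the generating
series of the stack of representations of the `m`-loop quiver. -/
noncomputable def a (m : ℤ) (d : ℕ) : RatFunc ℚ :=
  q ^ (m * (d : ℤ) ^ 2 + (d : ℤ)) * (∏ i ∈ Finset.Icc 1 d, (q ^ (2 * i) - 1))⁻¹

/-- The generating series `A_m(t) = Σ_d a_d t^d` of the `m`-loop quiver. -/
noncomputable def A (m : ℤ) : PowerSeries (RatFunc ℚ) := PowerSeries.mk (a m)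

/-- `B_m(t) := A_m(q² t) / A_m(t)`. -/
noncomputable def B (m : ℕ) : PowerSeries (RatFunc ℚ) :=
  PowerSeries.rescale (q ^ 2) (A m) * (A m)⁻¹

/-- The `d`-th coefficient of `B_m`, a rational function in `ℚ(q)`. -/
noncomputable def b (m : ℕ) (d : ℕ) : RatFunc ℚ := PowerSeries.coeff (R := RatFunc ℚ) d (B m)

/-! ### Basic facts about `q` -/

lemma q_eq : q = algebraMap (Polynomial ℚ) (RatFunc ℚ) Polynomial.X :=
  (RatFunc.algebraMap_X).symm

lemma q_ne_zero : q ≠ 0 := by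
  rw [q_eq]; exact RatFunc.algebraMap_ne_zero Polynomial.X_ne_zero

lemma q_pow_sub_one_ne_zero {i : ℕ} (hi : 1 ≤ i) : q ^ (2 * i) - (1 : RatFunc ℚ) ≠ 0 := by
  have h : (q : RatFunc ℚ) ^ (2 * i) - 1 =
      algebraMap (Polynomial ℚ) (RatFunc ℚ) (Polynomial.X ^ (2 * i) - 1) := by
    rw [map_sub, map_pow, map_one, q_eq]
  rw [h]
  apply RatFunc.algebraMap_ne_zero
  intro h2
  have h3 := congrArg (Polynomial.eval (0:ℚ)) h2
  rw [Polynomial.eval_sub, Polynomial.eval_pow, Polynomial.eval_X, Polynomial.eval_one,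
    Polynomial.eval_zero, zero_pow (by omega), zero_sub] at h3
  norm_num at h3

lemma P_ne_zero (d : ℕ) : (∏ i ∈ Finset.Icc 1 d, (q ^ (2 * i) - 1)) ≠ 0 := by
  apply Finset.prod_ne_zero_iff.mpr
  intro i hi
  exact q_pow_sub_one_ne_zero (Finset.mem_Icc.mp hi).1

/-! ### The subring of rational functions regular at `-1` and evaluation -/

/-- Regular at `-1`. -/
def Reg (x : RatFunc ℚ) : Prop := Polynomial.eval (-1 : ℚ) x.denom ≠ 0

lemma eval₂_eq_eval (p : Polynomial ℚ) (x : ℚ) :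
    Polynomial.eval₂ (RingHom.id ℚ) x p = p.eval x := by
  rw [Polynomial.eval]

/-- The subring of `ℚ(q)` of rational functions regular at `-1`. -/
noncomputable def R : Subring (RatFunc ℚ) where
  carrier := {x | Reg x}
  one_mem' := by simp [Reg, RatFunc.denom_one]
  zero_mem' := by simp [Reg, RatFunc.denom_zero]
  mul_mem' {x y} hx hy := by
    intro h
    obtain ⟨c, hc⟩ := RatFunc.denom_mul_dvd x y
    have := congrArg (Polynomial.eval (-1:ℚ)) hc
    rw [Polynomial.eval_mul, Polynomial.eval_mul, h, zero_mul] at this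
    exact mul_ne_zero hx hy this
  add_mem' {x y} hx hy := by
    intro h
    obtain ⟨c, hc⟩ := RatFunc.denom_add_dvd x y
    have := congrArg (Polynomial.eval (-1:ℚ)) hc
    rw [Polynomial.eval_mul, Polynomial.eval_mul, h, zero_mul] at this
    exact mul_ne_zero hx hy this
  neg_mem' {x} hx := by
    intro h
    have hneg : (-x) = RatFunc.C (-1) * x := by rw [map_neg, map_one]; ring
    obtain ⟨c, hc⟩ := hneg ▸ RatFunc.denom_mul_dvd (RatFunc.C (-1)) x
    rw [RatFunc.denom_C, one_mul] at hc
    have := congrArg (Polynomial.eval (-1:ℚ)) hc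
    rw [Polynomial.eval_mul, h, zero_mul] at this
    exact hx this

/-- Evaluation at `-1` as a ring homomorphism on `R`. -/
noncomputable def ev : R →+* ℚ where
  toFun x := RatFunc.eval (RingHom.id ℚ) (-1) x.val
  map_one' := RatFunc.eval_one _ _
  map_zero' := RatFunc.eval_zero _ _
  map_mul' x y := by
    apply RatFunc.eval_mul <;> rw [eval₂_eq_eval]
    exacts [x.2, y.2]
  map_add' x y := by
    apply RatFunc.eval_add <;> rw [eval₂_eq_eval]
    exacts [x.2, y.2]

lemma q_mem_R : q ∈ R := by
  show Reg q
  unfold Reg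
  rw [show q = RatFunc.X from rfl, RatFunc.denom_X]
  norm_num

noncomputable def qR : R := ⟨q, q_mem_R⟩

lemma ev_qR : ev qR = -1 := by
  show RatFunc.eval _ _ RatFunc.X = -1
  rw [RatFunc.eval_X]

/-! ### The functional equation of `A` -/

lemma a_zero (m : ℤ) : a m 0 = 1 := by
  simp [a]

lemma a_rec (m : ℤ) (e : ℕ) :
    a m (e + 1) * (q ^ (2 * (e + 1)) - 1) = q ^ (m * (2 * (e : ℤ) + 1) + 1) * a m e := by
  have hc : q ^ (2 * (e + 1)) - (1 : RatFunc ℚ) ≠ 0 := q_pow_sub_one_ne_zero (by omega)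
  have hsplit : (∏ i ∈ Finset.Icc 1 (e + 1), (q ^ (2 * i) - 1)) =
      (∏ i ∈ Finset.Icc 1 e, (q ^ (2 * i) - 1)) * (q ^ (2 * (e + 1)) - 1) :=
    Finset.prod_Icc_succ_top (by omega) _
  rw [a, a, hsplit, mul_inv, mul_assoc, mul_assoc, inv_mul_cancel₀ hc, mul_one]
  rw [← mul_assoc (q ^ (m * (2 * (e : ℤ) + 1) + 1)), ← zpow_add₀ q_ne_zero]
  congr 2
  push_cast
  ring

lemma A_feq (m : ℕ) :
    PowerSeries.rescale (q ^ 2) (A m) =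
      A m + PowerSeries.C (q ^ (m + 1)) *
        (PowerSeries.X * PowerSeries.rescale (q ^ (2 * m)) (A m)) := by
  ext d
  rw [map_add, coeff_C_mul, A, coeff_rescale, coeff_mk]
  cases d with
  | zero =>
    simp [a_zero, coeff_zero_eq_constantCoeff, map_mul]
  | succ e =>
    simp only [coeff_succ_X_mul, coeff_rescale, coeff_mk]
    have h := a_rec (m : ℤ) e
    have h1 : (q ^ 2) ^ (e + 1) = q ^ (2 * (e + 1)) := (pow_mul q 2 (e + 1)).symm
    have h2 : q ^ (m + 1) * ((q ^ (2 * m)) ^ e * a m e) = q ^ (m * (2 * e + 1) + 1) * a m e := by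
      rw [← pow_mul, ← mul_assoc, ← pow_add]
      congr 2
      ring
    have h3 : (q : RatFunc ℚ) ^ ((m : ℤ) * (2 * (e : ℤ) + 1) + 1) =
        q ^ (m * (2 * e + 1) + 1) := by
      rw [show ((m : ℤ) * (2 * (e : ℤ) + 1) + 1) = ((m * (2 * e + 1) + 1 : ℕ) : ℤ) by
        push_cast; ring, zpow_natCast]
    rw [h1, h2]
    rw [h3] at h
    linear_combination h

/-! ### Power series helpers -/

lemma constantCoeff_rescale (c : RatFunc ℚ) (φ : PowerSeries (RatFunc ℚ)) :
    PowerSeries.constantCoeff (PowerSeries.rescale c φ) = PowerSeries.constantCoeff φ := by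
  rw [← coeff_zero_eq_constantCoeff_apply, coeff_rescale, pow_zero, one_mul,
    coeff_zero_eq_constantCoeff_apply]

lemma constantCoeff_A (m : ℤ) : PowerSeries.constantCoeff (A m) = 1 := by
  rw [A, ← coeff_zero_eq_constantCoeff_apply, coeff_mk, a_zero]

lemma rescale_inv (c : RatFunc ℚ) (φ : PowerSeries (RatFunc ℚ))
    (h : PowerSeries.constantCoeff φ ≠ 0) :
    PowerSeries.rescale c (φ⁻¹) = (PowerSeries.rescale c φ)⁻¹ := by
  have h2 : PowerSeries.constantCoeff (PowerSeries.rescale c φ) ≠ 0 := by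
    rwa [constantCoeff_rescale]
  have h1 : PowerSeries.rescale c φ * PowerSeries.rescale c (φ⁻¹) = 1 := by
    rw [← map_mul, PowerSeries.mul_inv_cancel _ h, map_one]
  calc PowerSeries.rescale c (φ⁻¹)
      = ((PowerSeries.rescale c φ)⁻¹ * PowerSeries.rescale c φ) *
          PowerSeries.rescale c (φ⁻¹) := by
        rw [PowerSeries.inv_mul_cancel _ h2, one_mul]
    _ = (PowerSeries.rescale c φ)⁻¹ * (PowerSeries.rescale c φ * PowerSeries.rescale c (φ⁻¹)) := by
        ring
    _ = (PowerSeries.rescale c φ)⁻¹ := by rw [h1, mul_one]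

lemma prod_telescope (f : ℕ → PowerSeries (RatFunc ℚ))
    (hf : ∀ j, PowerSeries.constantCoeff (f j) ≠ 0) (n : ℕ) :
    ∏ j ∈ Finset.range n, (f (j + 1) * (f j)⁻¹) = f n * (f 0)⁻¹ := by
  induction n with
  | zero => rw [Finset.range_zero, Finset.prod_empty, PowerSeries.mul_inv_cancel _ (hf 0)]
  | succ n ih =>
    rw [Finset.prod_range_succ, ih,
      show f n * (f 0)⁻¹ * (f (n + 1) * (f n)⁻¹) =
        (f n * (f n)⁻¹) * (f (n + 1) * (f 0)⁻¹) by ring,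
      PowerSeries.mul_inv_cancel _ (hf n), one_mul]

/-! ### The functional equation of `B` -/

lemma rescale_B (m j : ℕ) :
    PowerSeries.rescale (q ^ (2 * j)) (B m) =
      PowerSeries.rescale (q ^ (2 * (j + 1))) (A m) *
        (PowerSeries.rescale (q ^ (2 * j)) (A m))⁻¹ := by
  rw [B, map_mul, PowerSeries.rescale_rescale, rescale_inv _ _ (by rw [constantCoeff_A]; norm_num)]
  congr 2
  rw [← pow_add]
  congr 1
  ring

lemma B_feq (m : ℕ) :
    B m = 1 + PowerSeries.C (q ^ (m + 1)) *
      (PowerSeries.X * ∏ j ∈ Finset.range m, PowerSeries.rescale (q ^ (2 * j)) (B m)) := by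
  have hcc : ∀ j : ℕ, PowerSeries.constantCoeff
      (PowerSeries.rescale (q ^ (2 * j)) (A m)) ≠ 0 := by
    intro j; rw [constantCoeff_rescale, constantCoeff_A]; norm_num
  have htel : ∏ j ∈ Finset.range m, PowerSeries.rescale (q ^ (2 * j)) (B m) =
      PowerSeries.rescale (q ^ (2 * m)) (A m) * (A m)⁻¹ := by
    have := prod_telescope (fun j => PowerSeries.rescale (q ^ (2 * j)) (A m)) hcc m
    rw [Finset.prod_congr rfl (fun j _ => rescale_B m j), this]
    congr 2
    rw [mul_zero, pow_zero, PowerSeries.rescale_one, RingHom.id_apply]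
  rw [htel, B, A_feq m, add_mul, PowerSeries.mul_inv_cancel _ (by rw [constantCoeff_A]; norm_num)]
  ring

/-! ### Coefficient recursion and regularity -/

lemma b_zero (m : ℕ) : b m 0 = 1 := by
  rw [b, B_feq m, map_add, coeff_C_mul]
  rw [coeff_zero_eq_constantCoeff_apply, coeff_zero_eq_constantCoeff_apply, map_one, map_mul,
    PowerSeries.constantCoeff_X, zero_mul, mul_zero, add_zero]

lemma b_succ (m e : ℕ) :
    b m (e + 1) = q ^ (m + 1) *
      ∑ l ∈ Finset.finsuppAntidiag (Finset.range m) e,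
        ∏ j ∈ Finset.range m, ((q ^ (2 * j)) ^ (l j) * b m (l j)) := by
  rw [b, B_feq m, map_add, coeff_C_mul, coeff_succ_X_mul, PowerSeries.coeff_one,
    if_neg (Nat.succ_ne_zero e), zero_add, PowerSeries.coeff_prod]
  congr 1
  refine Finset.sum_congr rfl fun l _ => Finset.prod_congr rfl fun j _ => ?_
  rw [coeff_rescale, b]

lemma b_mem_R (m : ℕ) : ∀ d, b m d ∈ R := by
  intro d
  induction d using Nat.strong_induction_on with
  | _ d ih =>
    cases d with
    | zero => rw [b_zero]; exact one_mem R
    | succ e =>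
      rw [b_succ]
      refine mul_mem (pow_mem q_mem_R _) (Subring.sum_mem R fun l hl => ?_)
      refine Subring.prod_mem R fun j hj => ?_
      have hle : l j ≤ e := by
        rw [Finset.mem_finsuppAntidiag] at hl
        calc l j ≤ ∑ i ∈ Finset.range m, l i :=
              Finset.single_le_sum (fun i _ => Nat.zero_le _) hj
          _ = e := hl.1
      exact mul_mem (pow_mem (pow_mem q_mem_R _) _) (ih (l j) (by omega))

/-! ### Lifting to `R` and specializing -/

lemma map_rescale {S T : Type*} [CommSemiring S] [CommSemiring T] (f : S →+* T) (c : S)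
    (φ : PowerSeries S) :
    PowerSeries.map f (PowerSeries.rescale c φ) =
      PowerSeries.rescale (f c) (PowerSeries.map f φ) := by
  ext n
  rw [PowerSeries.coeff_map, coeff_rescale, coeff_rescale, PowerSeries.coeff_map, map_mul, map_pow]

lemma map_subtype_injective :
    Function.Injective (PowerSeries.map (R.subtype)) := by
  intro x y h
  ext n
  have := congrArg (PowerSeries.coeff n) h
  rw [PowerSeries.coeff_map, PowerSeries.coeff_map] at this
  exact this

noncomputable def Blift (m : ℕ) : PowerSeries R := PowerSeries.mk fun d => ⟨b m d, b_mem_R m d⟩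

lemma map_Blift (m : ℕ) : PowerSeries.map R.subtype (Blift m) = B m := by
  ext d
  rw [PowerSeries.coeff_map, Blift, coeff_mk]
  rfl

lemma map_pow_qR (k : ℕ) : R.subtype (qR ^ k) = q ^ k := by rw [map_pow]; rfl

lemma Blift_feq (m : ℕ) :
    Blift m = 1 + PowerSeries.C (qR ^ (m + 1)) *
      (PowerSeries.X * ∏ j ∈ Finset.range m, PowerSeries.rescale (qR ^ (2 * j)) (Blift m)) := by
  apply map_subtype_injective
  have hprod : ∏ j ∈ Finset.range m,
      PowerSeries.map R.subtype (PowerSeries.rescale (qR ^ (2 * j)) (Blift m)) =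
      ∏ j ∈ Finset.range m, PowerSeries.rescale (q ^ (2 * j)) (B m) :=
    Finset.prod_congr rfl fun j _ => by rw [map_rescale, map_Blift, map_pow_qR]
  rw [map_Blift, map_add, map_one, map_mul, map_mul, PowerSeries.map_C, PowerSeries.map_X,
    map_prod, hprod, map_pow_qR]
  exact B_feq m

/-- The Euler-characteristic specialization `q ↦ −1` of `B_m` is defined (the reduced
denominator of each coefficient does not vanish at `q = −1`), and the specialized series
`β_m(t) = Σ_d b_{m,d}(−1) t^d` satisfies `β_m = 1 + (−1)^{m+1} t β_m^m`. -/
theorem B_euler_specialization (m : ℕ) :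
    (∀ d : ℕ, Polynomial.eval (-1 : ℚ) (b m d).denom ≠ 0) ∧
    PowerSeries.mk (fun d => RatFunc.eval (RingHom.id ℚ) (-1) (b m d)) =
      1 + PowerSeries.C (R := ℚ) ((-1) ^ (m + 1)) * PowerSeries.X *
        (PowerSeries.mk fun d => RatFunc.eval (RingHom.id ℚ) (-1) (b m d)) ^ m := by
  constructor
  · exact fun d => b_mem_R m d
  · have hmk : PowerSeries.mk (fun d => RatFunc.eval (RingHom.id ℚ) (-1) (b m d)) =
        PowerSeries.map ev (Blift m) := by
      ext d
      rw [PowerSeries.coeff_map, coeff_mk, Blift, coeff_mk]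
      rfl
    have := congrArg (PowerSeries.map ev) (Blift_feq m)
    rw [map_add, map_one, map_mul, map_mul, PowerSeries.map_C, PowerSeries.map_X, map_prod] at this
    have hres : ∀ j ∈ Finset.range m,
        PowerSeries.map ev (PowerSeries.rescale (qR ^ (2 * j)) (Blift m)) =
          PowerSeries.map ev (Blift m) := by
      intro j _
      rw [map_rescale, map_pow, ev_qR, show ((-1 : ℚ)) ^ (2 * j) = 1 by
        rw [pow_mul]; norm_num, PowerSeries.rescale_one, RingHom.id_apply]
    rw [Finset.prod_congr rfl hres, Finset.prod_const, Finset.card_range, map_pow, ev_qR] at this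
    rw [hmk]
    linear_combination this
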